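/- For any real number α and positive integer N, the set of distinct values {frac(dα) : 1 ≤ d ≤ N}, where frac(x) = x - ⌊x⌋, partitions the circle ℝ/ℤ into arcs whose lengths take at most three distinct values. Precisely: if s₁ < s₂ < ⋯ < s_n are the distinct values of frac(dα) for 1 ≤ d ≤ N, then the set {s_{j+1} - s_j : 1 ≤ j < n} ∪ {s₁ + 1 - s_n} has cardinality at most 3. -/

import Mathlib

lemma fract_sub_fract (a b : ℝ) :
    Int.fract (Int.fract a - Int.fract b) = Int.fract (a - b) := by
  have h : Int.fract a - Int.fract b = (a - b) - ((⌊a⌋ - ⌊b⌋ : ℤ) : ℝ) := by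
    rw [Int.fract, Int.fract]; push_cast; ring
  rw [h, Int.fract_sub_intCast]

lemma fract_add_fract' (a b : ℝ) :
    Int.fract (Int.fract a + Int.fract b) = Int.fract (a + b) := by
  have h : Int.fract a + Int.fract b = (a + b) - ((⌊a⌋ + ⌊b⌋ : ℤ) : ℝ) := by
    rw [Int.fract, Int.fract]; push_cast; ring
  rw [h, Int.fract_sub_intCast]

lemma fract_eq_zero_unit {a b : ℝ} (ha : 0 ≤ a) (ha1 : a < 1) (hb : 0 ≤ b)
    (hb1 : b < 1) (h : Int.fract (a - b) = 0) : a = b := by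
  rw [Int.fract] at h
  have h2 : a - b = (⌊a - b⌋ : ℝ) := by linarith
  have hl : (-1 : ℝ) < (⌊a - b⌋ : ℝ) := by rw [← h2]; linarith
  have hr : ((⌊a - b⌋ : ℝ)) < 1 := by rw [← h2]; linarith
  have hz : ⌊a - b⌋ = 0 := by
    have hl' : (-1 : ℤ) < ⌊a - b⌋ := by exact_mod_cast hl
    have hr' : ⌊a - b⌋ < 1 := by exact_mod_cast hr
    omega
  rw [hz] at h2; simp at h2; linarith

lemma fract_pos_of_ne {a b : ℝ} (ha : 0 ≤ a) (ha1 : a < 1) (hb : 0 ≤ b)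
    (hb1 : b < 1) (hne : a ≠ b) : 0 < Int.fract (a - b) := by
  rcases lt_or_eq_of_le (Int.fract_nonneg (a - b)) with h | h
  · exact h
  · exact absurd (fract_eq_zero_unit ha ha1 hb hb1 h.symm) hne

lemma fract_compl {a b : ℝ} (h : Int.fract (a - b) ≠ 0) :
    Int.fract (b - a) = 1 - Int.fract (a - b) := by
  have hh : b - a = -(a - b) := by ring
  rw [hh, Int.fract_neg h]

lemma fract_chain (a b c : ℝ) :
    Int.fract (c - a) = Int.fract (Int.fract (b - a) + Int.fract (c - b)) := by
  rw [fract_add_fract']; congr 1; ring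

lemma fract_sub_of_lt {y a : ℝ} (hy : 0 ≤ y) (ha : a < 1) (h : y < a) :
    Int.fract (y - a) = y - a + 1 := by
  have h1 : Int.fract (y - a) = Int.fract ((y - a + 1) + ((-1 : ℤ) : ℝ)) := by
    norm_num
  rw [h1, Int.fract_add_intCast, Int.fract_eq_self.2 ⟨by linarith, by linarith⟩]

lemma fract_shift (α : ℝ) (e d : ℕ) :
    Int.fract (Int.fract ((e + 1 : ℕ) * α) - Int.fract ((d + 1 : ℕ) * α)) =
      Int.fract (Int.fract ((e : ℕ) * α) - Int.fract ((d : ℕ) * α)) := by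
  rw [fract_sub_fract, fract_sub_fract]; congr 1; push_cast; ring

noncomputable def gfun (S : Set ℝ) (t : ℝ) : ℝ :=
  sInf ((fun y => Int.fract (y - t)) '' (S \ {t}))

noncomputable def bfun (S : Set ℝ) (t : ℝ) : ℝ :=
  sInf ((fun z => Int.fract (t - z)) '' (S \ {t}))

lemma gfun_isLeast {S : Set ℝ} (hfin : S.Finite) {t u : ℝ}
    (hu : u ∈ S) (hut : u ≠ t) :
    IsLeast ((fun y => Int.fract (y - t)) '' (S \ {t})) (gfun S t) := by
  have hne : ((fun y => Int.fract (y - t)) '' (S \ {t})).Nonempty :=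
    ⟨_, ⟨u, ⟨hu, hut⟩, rfl⟩⟩
  have hfin' : ((fun y => Int.fract (y - t)) '' (S \ {t})).Finite :=
    (hfin.diff).image _
  exact ⟨hne.csInf_mem hfin', fun x hx => csInf_le hfin'.bddBelow hx⟩

lemma gfun_eq {S : Set ℝ} {t v : ℝ}
    (hmem : ∃ y, (y ∈ S ∧ y ≠ t) ∧ Int.fract (y - t) = v)
    (hlb : ∀ y ∈ S, y ≠ t → v ≤ Int.fract (y - t)) : gfun S t = v := by
  apply IsLeast.csInf_eq
  constructor
  · obtain ⟨y, hy, hv⟩ := hmem; exact ⟨y, hy, hv⟩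
  · rintro u ⟨y, ⟨hyS, hyt⟩, rfl⟩; exact hlb y hyS hyt

lemma bfun_eq {S : Set ℝ} (hS01 : ∀ s ∈ S, 0 ≤ s ∧ s < 1)
    {t x : ℝ} (ht : t ∈ S) (hx : x ∈ S) (hxt : x ≠ t)
    (hmin : ∀ z ∈ S, z ≠ x → Int.fract (t - x) ≤ Int.fract (z - x)) :
    bfun S t = Int.fract (t - x) := by
  apply IsLeast.csInf_eq
  constructor
  · exact ⟨x, ⟨hx, hxt⟩, rfl⟩
  · rintro v ⟨z, ⟨hzS, hzt⟩, rfl⟩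
    by_contra hc
    push_neg at hc
    obtain ⟨hx0, hx1⟩ := hS01 x hx
    obtain ⟨ht0, ht1⟩ := hS01 t ht
    obtain ⟨hz0, hz1⟩ := hS01 z hzS
    have hp1 : Int.fract (t - x) < 1 := Int.fract_lt_one _
    have hq : 0 < Int.fract (t - z) := fract_pos_of_ne ht0 ht1 hz0 hz1 (Ne.symm hzt)
    have hzx : z ≠ x := by rintro rfl; exact lt_irrefl _ hc
    have hkey : Int.fract (z - x) = Int.fract (t - x) - Int.fract (t - z) := by
      have h1 : Int.fract (z - x) = Int.fract (Int.fract (t - x) - Int.fract (t - z)) := by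
        rw [fract_sub_fract]; congr 1; ring
      rw [h1, Int.fract_eq_self.2 ⟨by linarith, by linarith⟩]
    have := hmin z hzS hzx
    linarith


/-- The set of distinct values `f (d*α + β)` for `1 ≤ d ≤ N`. -/
def orbitSet (f : ℝ → ℝ) (α β : ℝ) (N : ℕ) : Set ℝ :=
  {y | ∃ d : ℕ, 1 ≤ d ∧ d ≤ N ∧ y = f (d * α + β)}

/-- Gaps between consecutive (nearest-neighbor) elements of a set of reals. -/
def consGaps (S : Set ℝ) : Set ℝ :=
  {g | ∃ a ∈ S, ∃ b ∈ S, a < b ∧ (∀ x ∈ S, x ≤ a ∨ b ≤ x) ∧ g = b - a}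

/-- The gap length set `G_{f,α,β,N}`: consecutive gaps together with the
extremal gap `s₁ - inf f + sup f - s_n`. -/
def gapSet (f : ℝ → ℝ) (α β : ℝ) (N : ℕ) : Set ℝ :=
  consGaps (orbitSet f α β N) ∪
    {sInf (orbitSet f α β N) - sInf (Set.range f) + sSup (Set.range f) -
      sSup (orbitSet f α β N)}

/-- **Three Gap Theorem.** The points `frac(dα)`, `1 ≤ d ≤ N`, partition the
circle `ℝ/ℤ` into arcs of at most three distinct lengths. -/
theorem three_gap_theorem (α : ℝ) (N : ℕ) (hN : 0 < N) (S : Set ℝ)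
    (hS : S = {y | ∃ d : ℕ, 1 ≤ d ∧ d ≤ N ∧ y = Int.fract (d * α)}) :
    (consGaps S ∪ {sInf S + 1 - sSup S}).ncard ≤ 3 := by
  have hmemS : ∀ y : ℝ, y ∈ S ↔ ∃ d : ℕ, 1 ≤ d ∧ d ≤ N ∧ y = Int.fract (d * α) := by
    intro y; rw [hS]; rfl
  have hS01 : ∀ s ∈ S, 0 ≤ s ∧ s < 1 := by
    intro s hs
    obtain ⟨d, -, -, rfl⟩ := (hmemS s).1 hs
    exact ⟨Int.fract_nonneg _, Int.fract_lt_one _⟩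
  have hfin : S.Finite := by
    have hsub : S ⊆ (fun d : ℕ => Int.fract (d * α)) '' (Set.Icc 1 N) := by
      intro y hy
      obtain ⟨d, h1, h2, hy⟩ := (hmemS y).1 hy
      exact ⟨d, ⟨h1, h2⟩, hy.symm⟩
    exact ((Set.finite_Icc _ _).image _).subset hsub
  have hmS : Int.fract ((1 : ℕ) * α) ∈ S := (hmemS _).2 ⟨1, le_refl 1, hN, rfl⟩
  have hMS : Int.fract ((N : ℕ) * α) ∈ S := (hmemS _).2 ⟨N, hN, le_refl N, rfl⟩
  by_cases h2 : ∃ u ∈ S, ∃ v ∈ S, u ≠ v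
  case neg =>
    have hcg : consGaps S = ∅ := by
      rw [Set.eq_empty_iff_forall_notMem]
      rintro g ⟨a, ha, b, hb, hab, -, -⟩
      exact h2 ⟨a, ha, b, hb, ne_of_lt hab⟩
    rw [hcg, Set.empty_union, Set.ncard_singleton]
    omega
  case pos =>
  obtain ⟨u0, hu0, v0, hv0, huv0⟩ := h2
  -- minimizer facts
  have hGmem : ∀ t ∈ S, ∃ y ∈ S, y ≠ t ∧ Int.fract (y - t) = gfun S t := by
    intro t ht
    have h2' : ∃ u ∈ S, u ≠ t := by
      rcases eq_or_ne u0 t with rfl | h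
      · exact ⟨v0, hv0, Ne.symm huv0⟩
      · exact ⟨u0, hu0, h⟩
    obtain ⟨u, hu, hut⟩ := h2'
    obtain ⟨y, ⟨hyS, hyt⟩, hy⟩ := (gfun_isLeast hfin hu hut).1
    exact ⟨y, hyS, hyt, hy⟩
  have hGle : ∀ t ∈ S, ∀ y ∈ S, y ≠ t → gfun S t ≤ Int.fract (y - t) := by
    intro t ht y hyS hyt
    have h2' : ∃ u ∈ S, u ≠ t := ⟨y, hyS, hyt⟩
    obtain ⟨u, hu, hut⟩ := h2'
    exact (gfun_isLeast hfin hu hut).2 ⟨y, ⟨hyS, hyt⟩, rfl⟩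
  have hGpos : ∀ t ∈ S, 0 < gfun S t := by
    intro t ht
    obtain ⟨y, hyS, hyt, hy⟩ := hGmem t ht
    obtain ⟨hy0, hy1⟩ := hS01 y hyS
    obtain ⟨ht0, ht1⟩ := hS01 t ht
    rw [← hy]
    exact fract_pos_of_ne hy0 hy1 ht0 ht1 hyt
  -- Step 1 : all gaps are values of gfun
  have hsub : (consGaps S ∪ {sInf S + 1 - sSup S}) ⊆ gfun S '' S := by
    intro g hg
    rcases hg with hg | hg
    · obtain ⟨a, ha, b, hb, hab, hsep, rfl⟩ := hg
      obtain ⟨ha0, ha1⟩ := hS01 a ha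
      obtain ⟨hb0, hb1⟩ := hS01 b hb
      refine ⟨a, ha, ?_⟩
      apply gfun_eq
      · exact ⟨b, ⟨hb, ne_of_gt hab⟩,
          Int.fract_eq_self.2 ⟨by linarith, by linarith⟩⟩
      · intro y hyS hyne
        obtain ⟨hy0, hy1⟩ := hS01 y hyS
        rcases hsep y hyS with h | h
        · have hya : y < a := lt_of_le_of_ne h hyne
          rw [fract_sub_of_lt hy0 ha1 hya]
          linarith
        · rw [Int.fract_eq_self.2 ⟨by linarith, by linarith⟩]
          linarith
    · rw [Set.mem_singleton_iff] at hg
      have hne : S.Nonempty := ⟨u0, hu0⟩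
      have hiS : sInf S ∈ S := hne.csInf_mem hfin
      have hsS : sSup S ∈ S := hne.csSup_mem hfin
      have hle_inf : ∀ y ∈ S, sInf S ≤ y := fun y hy => csInf_le hfin.bddBelow hy
      have hle_sup : ∀ y ∈ S, y ≤ sSup S := fun y hy => le_csSup hfin.bddAbove hy
      have hlt : sInf S < sSup S := by
        rcases lt_or_eq_of_le (le_csSup hfin.bddAbove hiS) with h | h
        · exact h
        · exfalso
          apply huv0
          have hu1 := hle_inf u0 hu0
          have hu2 := hle_sup u0 hu0
          have hv1 := hle_inf v0 hv0
          have hv2 := hle_sup v0 hv0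
          linarith
      obtain ⟨hi0, hi1⟩ := hS01 _ hiS
      obtain ⟨hs0, hs1⟩ := hS01 _ hsS
      refine ⟨sSup S, hsS, ?_⟩
      rw [hg]
      apply gfun_eq
      · refine ⟨sInf S, ⟨hiS, ne_of_lt hlt⟩, ?_⟩
        rw [fract_sub_of_lt hi0 hs1 hlt]
        ring
      · intro y hyS hyne
        obtain ⟨hy0, hy1⟩ := hS01 y hyS
        have hya : y < sSup S := lt_of_le_of_ne (hle_sup y hyS) hyne
        rw [fract_sub_of_lt hy0 hs1 hya]
        have := hle_inf y hyS
        linarith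
  by_cases hsmallS : S.ncard ≤ 3
  · calc (consGaps S ∪ {sInf S + 1 - sSup S}).ncard
        ≤ (gfun S '' S).ncard := Set.ncard_le_ncard hsub (hfin.image _)
      _ ≤ S.ncard := Set.ncard_image_le hfin
      _ ≤ 3 := hsmallS
  · push_neg at hsmallS
    have hthird : ∀ a b : ℝ, ∃ z ∈ S, z ≠ a ∧ z ≠ b := by
      intro a b
      by_contra hc
      push_neg at hc
      have hsub2 : S ⊆ {a, b} := by
        intro z hz
        rcases eq_or_ne z a with rfl | hza
        · exact Set.mem_insert _ _
        · exact Set.mem_insert_of_mem _ (hc z hz hza)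
      have h1 := Set.ncard_le_ncard hsub2 ((Set.finite_singleton b).insert a)
      have h2 := Set.ncard_insert_le a ({b} : Set ℝ)
      rw [Set.ncard_singleton] at h2
      omega
    set T3 : Set ℝ :=
      {gfun S (Int.fract ((1 : ℕ) * α)), bfun S (Int.fract ((1 : ℕ) * α)),
        bfun S (Int.fract ((N : ℕ) * α)) + gfun S (Int.fract ((N : ℕ) * α))} with hT3
    have claim : ∀ d : ℕ, 1 ≤ d → d ≤ N → gfun S (Int.fract ((d : ℕ) * α)) ∈ T3 := by
      intro d hd1
      induction d, hd1 using Nat.le_induction with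
      | base => intro _; rw [hT3]; exact Set.mem_insert _ _
      | succ d hd IH =>
        intro hdN
        set m : ℝ := Int.fract ((1 : ℕ) * α) with hm
        set M : ℝ := Int.fract ((N : ℕ) * α) with hM
        set t : ℝ := Int.fract ((d + 1 : ℕ) * α) with ht
        set x' : ℝ := Int.fract ((d : ℕ) * α) with hx'
        have htS : t ∈ S := (hmemS t).2 ⟨d + 1, by omega, hdN, rfl⟩
        have hx'S : x' ∈ S := (hmemS x').2 ⟨d, hd, by omega, rfl⟩
        have IH' : gfun S x' ∈ T3 := IH (by omega)
        obtain ⟨y, hyS, hyt, hygt⟩ := hGmem t htS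
        obtain ⟨hy0, hy1⟩ := hS01 y hyS
        obtain ⟨ht0, ht1⟩ := hS01 t htS
        by_cases hym : y = m
        · -- minimizer of t is m : gap equals bfun S m
          subst hym
          have hbm : bfun S m = Int.fract (m - t) := by
            apply bfun_eq hS01 hmS htS (Ne.symm hyt)
            intro z hzS hzt
            rw [hygt]
            exact hGle t htS z hzS hzt
          rw [← hygt, ← hbm, hT3]
          exact Set.mem_insert_of_mem _ (Set.mem_insert _ _)
        · obtain ⟨e, he1, heN, hye⟩ := (hmemS y).1 hyS
          have he2 : 2 ≤ e := by
            by_contra hc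
            have : e = 1 := by omega
            subst this
            exact hym hye
          obtain ⟨e', rfl⟩ : ∃ e', e = e' + 1 := ⟨e - 1, by omega⟩
          set y' : ℝ := Int.fract ((e' : ℕ) * α) with hy'
          have hy'S : y' ∈ S := (hmemS y').2 ⟨e', by omega, by omega, rfl⟩
          obtain ⟨hy'0, hy'1⟩ := hS01 y' hy'S
          obtain ⟨hx'0, hx'1⟩ := hS01 x' hx'S
          have hdist : Int.fract (y - t) = Int.fract (y' - x') := by
            rw [hye]; exact fract_shift α e' d
          have hy'x' : y' ≠ x' := by
            intro h
            apply hyt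
            apply fract_eq_zero_unit hy0 hy1 ht0 ht1
            rw [hdist, h, sub_self, Int.fract_zero]
          have hA : gfun S x' ≤ gfun S t := by
            rw [← hygt, hdist]
            exact hGle x' hx'S y' hy'S hy'x'
          by_cases hsmall : ∃ w ∈ S, Int.fract (w - x') = gfun S x' ∧
              ∃ e'' : ℕ, 1 ≤ e'' ∧ e'' + 1 ≤ N ∧ w = Int.fract ((e'' : ℕ) * α)
          · -- push the minimizer forward : gap is unchanged
            obtain ⟨w, hwS, hwmin, e'', he''1, he''N, hwe⟩ := hsmall
            have hw'S : Int.fract ((e'' + 1 : ℕ) * α) ∈ S :=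
              (hmemS _).2 ⟨e'' + 1, by omega, he''N, rfl⟩
            have hd2 : Int.fract (Int.fract ((e'' + 1 : ℕ) * α) - t) = Int.fract (w - x') := by
              rw [hwe]; exact fract_shift α e'' d
            have hne : Int.fract ((e'' + 1 : ℕ) * α) ≠ t := by
              intro h
              rw [h, sub_self, Int.fract_zero] at hd2
              have := hGpos x' hx'S
              rw [hwmin] at hd2
              linarith
            have hB : gfun S t ≤ gfun S x' := by
              rw [← hwmin, ← hd2]
              exact hGle t htS _ hw'S hne
            rw [le_antisymm hB hA]
            exact IH'
          · -- the minimizer of x' is M and cannot be pushed forward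
            push_neg at hsmall
            have hminM : ∀ w ∈ S, Int.fract (w - x') = gfun S x' → w = M := by
              intro w hwS hwm
              obtain ⟨f, hf1, hfN, hwf⟩ := (hmemS w).1 hwS
              rcases eq_or_lt_of_le hfN with h | h
              · rw [hwf, hM, h]
              · exact absurd hwf (hsmall w hwS hwm f hf1 (by omega))
            obtain ⟨z', hz'S, hz'ne, hz'min⟩ := hGmem x' hx'S
            have hz'M : z' = M := hminM z' hz'S hz'min
            have hMx' : M ≠ x' := hz'M ▸ hz'ne
            have hgx'M : gfun S x' = Int.fract (M - x') := by rw [← hz'min, hz'M]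
            obtain ⟨hM0, hM1⟩ := hS01 M hMS
            have hbM : bfun S M = Int.fract (M - x') := by
              apply bfun_eq hS01 hMS hx'S (Ne.symm hMx')
              intro z hzS hzx
              rw [← hgx'M]
              exact hGle x' hx'S z hzS hzx
            have hgx'pos := hGpos x' hx'S
            have hgx'lt : gfun S x' < 1 := by
              rw [hgx'M]; exact Int.fract_lt_one _
            have hformula : ∀ w ∈ S, w ≠ x' → w ≠ M →
                Int.fract (w - x') = gfun S x' + Int.fract (w - M) := by
              intro w hwS hwx hwM
              obtain ⟨hw0, hw1⟩ := hS01 w hwS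
              have hle := hGle x' hx'S w hwS hwx
              have hu1 : 0 < Int.fract (w - M) := fract_pos_of_ne hw0 hw1 hM0 hM1 hwM
              have hu2 : Int.fract (w - M) < 1 := Int.fract_lt_one _
              have hch : Int.fract (w - x') =
                  Int.fract (Int.fract (M - x') + Int.fract (w - M)) := fract_chain x' M w
              rw [← hgx'M] at hch
              set s := gfun S x' + Int.fract (w - M) with hs
              by_cases hs1 : s < 1
              · rw [hch, Int.fract_eq_self.2 ⟨by positivity, hs1⟩]
              · exfalso
                push_neg at hs1
                have hfs : Int.fract s = s - 1 := by
                  have h1 : Int.fract s = Int.fract ((s - 1) + ((1 : ℤ) : ℝ)) := by norm_num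
                  rw [h1, Int.fract_add_intCast,
                    Int.fract_eq_self.2 ⟨by linarith, by linarith⟩]
                rw [hch, hfs] at hle
                have : Int.fract (w - x') = s - 1 := by rw [hch, hfs]
                linarith
            -- the minimizer of M
            obtain ⟨w, hwS, hwM, hwmin⟩ := hGmem M hMS
            have hwx' : w ≠ x' := by
              intro h
              obtain ⟨z, hzS, hzx, hzM⟩ := hthird x' M
              have h1 := hformula z hzS hzx hzM
              have h2 : Int.fract (x' - M) = 1 - Int.fract (M - x') := by
                apply fract_compl
                rw [← hgx'M]
                exact ne_of_gt hgx'pos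
              have h3 := hGle M hMS z hzS hzM
              rw [h] at hwmin
              rw [h2, ← hgx'M] at hwmin
              have h4 : Int.fract (z - x') < 1 := Int.fract_lt_one _
              linarith
            obtain ⟨f, hf1, hfN, hwf⟩ := (hmemS w).1 hwS
            have hfN' : f + 1 ≤ N := by
              rcases eq_or_lt_of_le hfN with h | h
              · exfalso; apply hwM; rw [hwf, hM, h]
              · omega
            have hw1S : Int.fract ((f + 1 : ℕ) * α) ∈ S :=
              (hmemS _).2 ⟨f + 1, by omega, hfN', rfl⟩
            have hd3 : Int.fract (Int.fract ((f + 1 : ℕ) * α) - t) = Int.fract (w - x') := by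
              rw [hwf]; exact fract_shift α f d
            have hwform := hformula w hwS hwx' hwM
            rw [hwmin] at hwform
            have hgMpos := hGpos M hMS
            have hneq : Int.fract ((f + 1 : ℕ) * α) ≠ t := by
              intro h
              rw [h, sub_self, Int.fract_zero] at hd3
              rw [hwform] at hd3
              linarith
            have hub : gfun S t ≤ gfun S x' + gfun S M := by
              rw [← hwform, ← hd3]
              exact hGle t htS _ hw1S hneq
            by_cases hy'M : y' = M
            · have heq : gfun S t = gfun S x' := by
                rw [← hygt, hdist, hy'M, ← hgx'M]
              rw [heq]; exact IH'
            · have h1 := hformula y' hy'S hy'x' hy'M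
              have h2 := hGle M hMS y' hy'S hy'M
              have hlb : gfun S x' + gfun S M ≤ gfun S t := by
                rw [← hygt, hdist, h1]
                linarith
              have heq : gfun S t = bfun S M + gfun S M := by
                rw [hbM, ← hgx'M]
                exact le_antisymm hub hlb
              rw [heq, hT3]
              exact Set.mem_insert_of_mem _ (Set.mem_insert_of_mem _ rfl)
    have hsub3 : (consGaps S ∪ {sInf S + 1 - sSup S}) ⊆ T3 := by
      intro v hv
      obtain ⟨t, ht, rfl⟩ := hsub hv
      obtain ⟨d, h1, h2d, rfl⟩ := (hmemS t).1 ht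
      exact claim d h1 h2d
    have hT3fin : T3.Finite := (((Set.finite_singleton _).insert _).insert _)
    calc (consGaps S ∪ {sInf S + 1 - sSup S}).ncard
        ≤ T3.ncard := Set.ncard_le_ncard hsub3 hT3fin
      _ ≤ 3 := by
          have h1 := Set.ncard_insert_le (gfun S (Int.fract ((1 : ℕ) * α)))
            ({bfun S (Int.fract ((1 : ℕ) * α)),
              bfun S (Int.fract ((N : ℕ) * α)) + gfun S (Int.fract ((N : ℕ) * α))} : Set ℝ)
          have h2 := Set.ncard_insert_le (bfun S (Int.fract ((1 : ℕ) * α)))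
            ({bfun S (Int.fract ((N : ℕ) * α)) + gfun S (Int.fract ((N : ℕ) * α))} : Set ℝ)
          rw [Set.ncard_singleton] at h2
          rw [hT3]
          omega
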